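/- Let R^f be a scoring mediator where f is continuous, non-decreasing, and f(1) > 2(2α−1)·f(1/α) for some α > 1. Then R^f is not u^{Ac}-learnable: some authors game with mediator R^f and action-targeted utility contains an improvement cycle. -/

import Mathlib

open Finset

set_option maxHeartbeats 1000000

noncomputable section

/-- Highest quality of a document on topic `k` under profile `a`:
`B_k(a) = max_j Q_{j,k} · 1[a_j = k]` (with value `0` when the max is over an empty set). -/
def hiQ {n m : ℕ} (Q : Fin n → Fin m → ℝ) (k : Fin m) (a : Fin n → Fin m) : ℝ :=
  Finset.univ.fold max 0 (fun j => if a j = k then Q j k else 0)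

/-- Number of authors writing on topic `k` with the highest quality `B_k(a)`. -/
def numTop {n m : ℕ} (Q : Fin n → Fin m → ℝ) (k : Fin m) (a : Fin n → Fin m) : ℕ :=
  (Finset.univ.filter (fun j => a j = k ∧ Q j k = hiQ Q k a)).card

/-- The PRP mediator: first-rank probability of author `j` on topic `k` under profile `a`. -/
def prp {n m : ℕ} (Q : Fin n → Fin m → ℝ) (k : Fin m) (a : Fin n → Fin m) (j : Fin n) : ℝ :=
  if a j = k ∧ Q j k = hiQ Q k a then 1 / (numTop Q k a : ℝ) else 0

/-- Exposure-targeted utility under the PRP mediator. -/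
def uEx {n m : ℕ} (D : Fin m → ℝ) (Q : Fin n → Fin m → ℝ) (a : Fin n → Fin m) (j : Fin n) : ℝ :=
  D (a j) * prp Q (a j) a j

/-- Action-targeted utility under the PRP mediator. -/
def uAc {n m : ℕ} (D : Fin m → ℝ) (Q : Fin n → Fin m → ℝ) (a : Fin n → Fin m) (j : Fin n) : ℝ :=
  D (a j) * prp Q (a j) a j * Q j (a j)

/-- `b` is obtained from `a` by a unilateral deviation of author `p` strictly
increasing her utility (an improvement step). -/
def ImpStep {n m : ℕ} (u : (Fin n → Fin m) → Fin n → ℝ)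
    (a b : Fin n → Fin m) (p : Fin n) : Prop :=
  (∀ i, i ≠ p → b i = a i) ∧ b p ≠ a p ∧ u a p < u b p

/-- `γ` is an improvement path: each consecutive pair of profiles is an improvement step. -/
def IsImpPath {n m l : ℕ} (u : (Fin n → Fin m) → Fin n → ℝ)
    (γ : Fin (l + 1) → Fin n → Fin m) : Prop :=
  ∀ r : Fin l, ∃ p, ImpStep u (γ r.castSucc) (γ r.succ) p

/-- `W_k(γ)`: the minimum of `H_k` over all profiles in the finite path `γ`. -/
def minTop {n m l : ℕ} (Q : Fin n → Fin m → ℝ) (k : Fin m)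
    (γ : Fin (l + 1) → Fin n → Fin m) : ℕ :=
  Finset.univ.inf' Finset.univ_nonempty (fun r => numTop Q k (γ r))

/-- `S_k(γ)`: the maximum of `B_k` over all profiles in the finite path `γ`. -/
def maxQ {n m l : ℕ} (Q : Fin n → Fin m → ℝ) (k : Fin m)
    (γ : Fin (l + 1) → Fin n → Fin m) : ℝ :=
  Finset.univ.sup' Finset.univ_nonempty (fun r => hiQ Q k (γ r))

/-- A scoring mediator with scoring function `f`: author `j` writing on topic `k`
gets first-rank probability `f(Q_{j,k}) / Σ_{i : a_i = k} f(Q_{i,k})`. -/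
def scoreMed {n m : ℕ} (f : ℝ → ℝ) (Q : Fin n → Fin m → ℝ) (k : Fin m)
    (a : Fin n → Fin m) (j : Fin n) : ℝ :=
  if a j = k then
    f (Q j k) / (∑ i ∈ Finset.univ.filter (fun i => a i = k), f (Q i k))
  else 0

/-- Exposure-targeted utility under the scoring mediator `R^f`. -/
def uExScore {n m : ℕ} (f : ℝ → ℝ) (D : Fin m → ℝ) (Q : Fin n → Fin m → ℝ)
    (a : Fin n → Fin m) (j : Fin n) : ℝ :=
  D (a j) * scoreMed f Q (a j) a j

/-- Action-targeted utility under the scoring mediator `R^f`. -/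
def uAcScore {n m : ℕ} (f : ℝ → ℝ) (D : Fin m → ℝ) (Q : Fin n → Fin m → ℝ)
    (a : Fin n → Fin m) (j : Fin n) : ℝ :=
  D (a j) * scoreMed f Q (a j) a j * Q j (a j)

/-- Cross-multiplication helper for comparing fractions. -/
lemma my_div_lt_div (a b c d : ℝ) (hb : 0 < b) (hd : 0 < d) (h : a * d < c * b) :
    a / b < c / d := by
  rw [div_lt_div_iff₀ hb hd]; exact h

/-- Existence of the distribution weights `φ, ψ` satisfying the six cycle
inequalities for the witness game. -/
lemma auxD (α F1 F2 F3 x2 x3 : ℝ)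
    (hα : 1 < α) (hF1 : 0 < F1) (hF2 : 0 < F2) (hF3 : 0 < F3)
    (h23 : 2 * F3 < F2) (hgapF : (2 * α - 1) * F2 < F1)
    (hx3 : 1 / α < x3) (hx32 : x3 < x2) (hx21 : x2 ≤ 1) :
    ∃ φ ψ : ℝ, 0 < φ ∧ 0 < ψ ∧
      2 * F1 < φ * (2 * F1 + F2) ∧
      x2 * F2 < ψ * (x3 * (F1 + F2)) ∧
      φ * (F1 + F3) < 2 * ψ * F1 ∧
      ψ < φ ∧
      2 * ψ < 1 ∧
      φ * (x3 * F3 * (2 * F1 + F2)) < x2 * F2 * (F1 + F3) := by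
  have hα0 : (0:ℝ) < α := by linarith
  have hx30 : 0 < x3 := lt_trans (by positivity) hx3
  have hx20 : 0 < x2 := lt_trans hx30 hx32
  have h1x3 : 1 < x3 * α := by
    rw [div_lt_iff₀ hα0] at hx3; linarith
  have hF21 : F2 < F1 := by linarith [hgapF, mul_pos (sub_pos.mpr hα) hF2]
  have hF31 : F3 < F1 := by linarith
  have hden1 : 0 < 2 * F1 + F2 := by linarith
  have hden2 : 0 < F1 + F3 := by linarith
  set p := 2 * F1 / (2 * F1 + F2) with hp
  set q := F1 / (F1 + F3) with hq
  have hpe : p * (2 * F1 + F2) = 2 * F1 := div_mul_cancel₀ _ (ne_of_gt hden1)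
  have hqe : q * (F1 + F3) = F1 := div_mul_cancel₀ _ (ne_of_gt hden2)
  have hp1 : p < 1 := by rw [hp, div_lt_one hden1]; linarith
  have hq1 : q < 1 := by rw [hq, div_lt_one hden2]; linarith
  have hphalf : 1 / 2 < p := by rw [hp, lt_div_iff₀ hden1]; linarith
  have hqhalf : 1 / 2 < q := by rw [hq, lt_div_iff₀ hden2]; linarith
  have hpq : p < q := by
    rw [hp, hq, div_lt_div_iff₀ hden1 hden2]
    linarith [mul_pos hF1 (sub_pos.mpr h23)]
  set φ := (p + q) / 2 with hφdef
  have hφp : p < φ := by rw [hφdef]; linarith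
  have hφq : φ < q := by rw [hφdef]; linarith
  have hφ0 : 0 < φ := by linarith
  have hφ1 : φ < 1 := by linarith
  have hφhalf : 1 / 2 < φ := by linarith
  set A := φ * (F1 + F3) / (2 * F1) with hA
  set B := x2 * F2 / (x3 * (F1 + F2)) with hB
  have hdenA : (0:ℝ) < 2 * F1 := by linarith
  have hdenB : 0 < x3 * (F1 + F2) := by positivity
  have hAe : A * (2 * F1) = φ * (F1 + F3) := div_mul_cancel₀ _ (ne_of_gt hdenA)
  have hBe : B * (x3 * (F1 + F2)) = x2 * F2 := div_mul_cancel₀ _ (ne_of_gt hdenB)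
  have hA0 : 0 < A := by rw [hA]; positivity
  have hAhalf : A < 1 / 2 := by
    rw [hA, div_lt_iff₀ hdenA]
    linarith [mul_lt_mul_of_pos_right hφq hden2, hqe]
  have hBhalf : B < 1 / 2 := by
    rw [hB, div_lt_iff₀ hdenB]
    have key : α * (2 * F2) < α * (x3 * (F1 + F2)) := by
      linarith [mul_pos (sub_pos.mpr h1x3) (show (0:ℝ) < F1 + F2 by linarith)]
    have key2 : 2 * F2 < x3 * (F1 + F2) := lt_of_mul_lt_mul_left key hα0.le
    linarith [key2, mul_le_mul_of_nonneg_right hx21 hF2.le]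
  have hMhalf : max A B < 1 / 2 := max_lt hAhalf hBhalf
  set ψ := (max A B + 1 / 2) / 2 with hψdef
  have hψM : max A B < ψ := by rw [hψdef]; linarith
  have hψhalf : ψ < 1 / 2 := by rw [hψdef]; linarith
  have hψA : A < ψ := lt_of_le_of_lt (le_max_left A B) hψM
  have hψB : B < ψ := lt_of_le_of_lt (le_max_right A B) hψM
  have hψ0 : 0 < ψ := lt_trans hA0 hψA
  refine ⟨φ, ψ, hφ0, hψ0, ?_, ?_, ?_, ?_, ?_, ?_⟩
  · linarith [mul_lt_mul_of_pos_right hφp hden1, hpe]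
  · linarith [mul_lt_mul_of_pos_right hψB hdenB, hBe]
  · linarith [mul_lt_mul_of_pos_right hψA hdenA, hAe]
  · linarith
  · linarith
  · have hA1 : F3 * (2 * F1 + F2) < F2 * (F1 + F3) := by
      linarith [mul_pos hF1 (sub_pos.mpr h23)]
    have hZ : (0:ℝ) < x3 * F3 * (2 * F1 + F2) := by positivity
    calc φ * (x3 * F3 * (2 * F1 + F2)) < 1 * (x3 * F3 * (2 * F1 + F2)) :=
          mul_lt_mul_of_pos_right hφ1 hZ
      _ = x3 * (F3 * (2 * F1 + F2)) := by ring
      _ < x2 * (F3 * (2 * F1 + F2)) := by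
          apply mul_lt_mul_of_pos_right hx32; positivity
      _ ≤ x2 * (F2 * (F1 + F3)) := mul_le_mul_of_nonneg_left hA1.le hx20.le
      _ = x2 * F2 * (F1 + F3) := by ring

/-- A scoring mediator `R^f` with `f` continuous, non-decreasing, nonnegative and
`f(1) > 2(2α−1)·f(1/α)` for some `α > 1` is not `u^{Ac}`-learnable: some authors
game with mediator `R^f` and action-targeted utility contains an improvement cycle. -/
theorem stmt18 (f : ℝ → ℝ) (hf0 : ∀ x, 0 ≤ f x) (hmono : Monotone f)
    (hcont : Continuous f) (α : ℝ) (hα : 1 < α)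
    (hgap : 2 * (2 * α - 1) * f (1 / α) < f 1) :
    ∃ (n m l : ℕ) (D : Fin m → ℝ) (Q : Fin n → Fin m → ℝ)
      (γ : Fin (l + 1) → Fin n → Fin m),
      0 < l ∧ (∀ k, 0 ≤ D k) ∧ (∑ k, D k = 1) ∧
      (∀ j k, Q j k ∈ Set.Icc (0:ℝ) 1) ∧
      IsImpPath (uAcScore f D Q) γ ∧ γ (Fin.last l) = γ 0 := by
  classical
  have hα0 : (0:ℝ) < α := by linarith
  have hfα0 : 0 ≤ f (1 / α) := hf0 _
  have hf1 : 0 < f 1 := by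
    have h0 : 0 ≤ 2 * (2 * α - 1) * f (1 / α) :=
      mul_nonneg (by linarith) hfα0
    linarith
  set δ := (f 1 - 2 * (2 * α - 1) * f (1 / α)) / (3 * f (1 / α) + 1) with hδdef
  have hδden : (0:ℝ) < 3 * f (1 / α) + 1 := by linarith
  have hδ0 : 0 < δ := div_pos (by linarith) hδden
  have hδmul : δ * (3 * f (1 / α) + 1) = f 1 - 2 * (2 * α - 1) * f (1 / α) :=
    div_mul_cancel₀ _ (ne_of_gt hδden)
  set c1 := 2 * α - 1 + δ with hc1def
  set c2 := 4 * α - 2 + 3 * δ with hc2def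
  have hc11 : 1 < c1 := by rw [hc1def]; linarith
  have hc1pos : 0 < c1 := by linarith
  have hc21 : 1 < c2 := by rw [hc2def]; linarith
  have hc2pos : 0 < c2 := by linarith
  have hc2fα : c2 * f (1 / α) < f 1 := by
    rw [hc2def]; linarith [hδmul, hδ0]
  have hc1fα : c1 * f (1 / α) < f 1 := by
    have h12 : c1 ≤ c2 := by rw [hc1def, hc2def]; linarith
    calc c1 * f (1 / α) ≤ c2 * f (1 / α) := mul_le_mul_of_nonneg_right h12 hfα0
      _ < f 1 := hc2fα
  have h1a : 1 / α ≤ 1 := by rw [div_le_one hα0]; linarith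
  have hIVT := intermediate_value_Icc h1a hcont.continuousOn
  have ht2mem : f 1 / c1 ∈ Set.Icc (f (1 / α)) (f 1) := by
    constructor
    · rw [le_div_iff₀ hc1pos]; linarith [hc1fα, mul_comm (f (1/α)) c1]
    · exact div_le_self hf1.le hc11.le
  have ht3mem : f 1 / c2 ∈ Set.Icc (f (1 / α)) (f 1) := by
    constructor
    · rw [le_div_iff₀ hc2pos]; linarith [hc2fα, mul_comm (f (1/α)) c2]
    · exact div_le_self hf1.le hc21.le
  obtain ⟨x2, hx2mem, hfx2⟩ := hIVT ht2mem
  obtain ⟨x3, hx3mem, hfx3⟩ := hIVT ht3mem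
  have hF2pos : 0 < f x2 := by rw [hfx2]; positivity
  have hF3pos : 0 < f x3 := by rw [hfx3]; positivity
  have hgapF : (2 * α - 1) * f x2 < f 1 := by
    rw [hfx2, ← mul_div_assoc, div_lt_iff₀ hc1pos, hc1def]
    linarith [mul_pos hf1 hδ0]
  have h23 : 2 * f x3 < f x2 := by
    rw [hfx2, hfx3, show 2 * (f 1 / c2) = 2 * f 1 / c2 from by ring,
      div_lt_div_iff₀ hc2pos hc1pos, hc1def, hc2def]
    linarith [mul_pos hf1 hδ0]
  have hx3gt : 1 / α < x3 := by
    rcases lt_or_ge (1 / α) x3 with h | h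
    · exact h
    · exfalso
      have hm := hmono h
      rw [hfx3] at hm
      have : f (1 / α) < f 1 / c2 := by
        rw [lt_div_iff₀ hc2pos]; linarith [hc2fα, mul_comm (f (1/α)) c2]
      linarith
  have hx32 : x3 < x2 := by
    rcases lt_or_ge x3 x2 with h | h
    · exact h
    · exfalso
      have hm := hmono h
      rw [hfx2, hfx3] at hm
      have hcc : c1 < c2 := by rw [hc1def, hc2def]; linarith
      have : f 1 / c2 < f 1 / c1 := by
        rw [div_lt_div_iff₀ hc2pos hc1pos]
        linarith [mul_lt_mul_of_pos_left hcc hf1]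
      linarith
  have hx21 : x2 ≤ 1 := hx2mem.2
  have hx30 : 0 < x3 := lt_trans (by positivity) hx3gt
  have hx20 : 0 < x2 := lt_trans hx30 hx32
  have hx31 : x3 ≤ 1 := le_trans hx32.le hx21
  obtain ⟨φ, ψ, hφ0, hψ0, h1, h2, h3, h4, h5, h6⟩ :=
    auxD α (f 1) (f x2) (f x3) x2 x3 hα hf1 hF2pos hF3pos h23 hgapF hx3gt hx32 hx21
  set N := 1 / (1 + φ + ψ) with hNdef
  have hsum : (0:ℝ) < 1 + φ + ψ := by linarith
  have hN : 0 < N := by rw [hNdef]; positivity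
  set DD : Fin 3 → ℝ := ![N, N * φ, N * ψ] with hDD
  set QQ : Fin 4 → Fin 3 → ℝ := ![![1,1,1], ![x2, x3, x3], ![1,1,1], ![1,1,1]] with hQQ
  have s1 : uAcScore f DD QQ ![0,0,0,1] 0 < uAcScore f DD QQ ![1,0,0,1] 0 := by
    simp only [uAcScore, scoreMed, Finset.sum_filter, Fin.sum_univ_four]
    simp [uAcScore, scoreMed, Finset.sum_filter, Fin.sum_univ_four, hDD, hQQ,
      Matrix.cons_val_zero, Matrix.cons_val_one, Matrix.head_cons,
      Matrix.cons_val_two, Matrix.tail_cons, Matrix.cons_val_three,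
      Matrix.vecHead, Matrix.vecTail, Function.comp]
    rw [show N * (f 1 / (f 1 + f x2 + f 1)) = N * f 1 / (f 1 + f x2 + f 1) from by ring,
      show N * φ * (f 1 / (f 1 + f 1)) = N * φ * f 1 / (f 1 + f 1) from by ring]
    apply my_div_lt_div _ _ _ _ (by positivity) (by positivity)
    linarith [mul_pos hN (mul_pos hf1 (sub_pos.mpr h1))]
  have s2 : uAcScore f DD QQ ![1,0,0,1] 1 < uAcScore f DD QQ ![1,2,0,1] 1 := by
    simp only [uAcScore, scoreMed, Finset.sum_filter, Fin.sum_univ_four]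
    simp [uAcScore, scoreMed, Finset.sum_filter, Fin.sum_univ_four, hDD, hQQ,
      Matrix.cons_val_zero, Matrix.cons_val_one, Matrix.head_cons,
      Matrix.cons_val_two, Matrix.tail_cons, Matrix.cons_val_three,
      Matrix.vecHead, Matrix.vecTail, Function.comp]
    rw [show N * (f x2 / (f x2 + f 1)) * x2 = N * f x2 * x2 / (f x2 + f 1) from by ring,
      show N * ψ * (f x3 / f x3) * x3 = N * ψ * f x3 * x3 / f x3 from by ring]
    apply my_div_lt_div _ _ _ _ (by positivity) (by positivity)
    linarith [mul_pos (mul_pos hN hF3pos) (sub_pos.mpr h2)]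
  have s3 : uAcScore f DD QQ ![1,2,0,1] 0 < uAcScore f DD QQ ![2,2,0,1] 0 := by
    simp only [uAcScore, scoreMed, Finset.sum_filter, Fin.sum_univ_four]
    simp [uAcScore, scoreMed, Finset.sum_filter, Fin.sum_univ_four, hDD, hQQ,
      Matrix.cons_val_zero, Matrix.cons_val_one, Matrix.head_cons,
      Matrix.cons_val_two, Matrix.tail_cons, Matrix.cons_val_three,
      Matrix.vecHead, Matrix.vecTail, Function.comp]
    rw [show N * φ * (f 1 / (f 1 + f 1)) = N * φ * f 1 / (f 1 + f 1) from by ring,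
      show N * ψ * (f 1 / (f 1 + f x3)) = N * ψ * f 1 / (f 1 + f x3) from by ring]
    apply my_div_lt_div _ _ _ _ (by positivity) (by positivity)
    linarith [mul_pos (mul_pos hN hf1) (sub_pos.mpr h3)]
  have s4 : uAcScore f DD QQ ![2,2,0,1] 1 < uAcScore f DD QQ ![2,1,0,1] 1 := by
    simp only [uAcScore, scoreMed, Finset.sum_filter, Fin.sum_univ_four]
    simp [uAcScore, scoreMed, Finset.sum_filter, Fin.sum_univ_four, hDD, hQQ,
      Matrix.cons_val_zero, Matrix.cons_val_one, Matrix.head_cons,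
      Matrix.cons_val_two, Matrix.tail_cons, Matrix.cons_val_three,
      Matrix.vecHead, Matrix.vecTail, Function.comp]
    rw [show N * ψ * (f x3 / (f 1 + f x3)) * x3 = N * ψ * f x3 * x3 / (f 1 + f x3) from by ring,
      show N * φ * (f x3 / (f x3 + f 1)) * x3 = N * φ * f x3 * x3 / (f x3 + f 1) from by ring]
    apply my_div_lt_div _ _ _ _ (by positivity) (by positivity)
    linarith [mul_pos (mul_pos (mul_pos (mul_pos hN hF3pos) hx30)
      (show (0:ℝ) < f 1 + f x3 from by positivity)) (sub_pos.mpr h4)]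
  have s5 : uAcScore f DD QQ ![2,1,0,1] 0 < uAcScore f DD QQ ![0,1,0,1] 0 := by
    simp only [uAcScore, scoreMed, Finset.sum_filter, Fin.sum_univ_four]
    simp [uAcScore, scoreMed, Finset.sum_filter, Fin.sum_univ_four, hDD, hQQ,
      Matrix.cons_val_zero, Matrix.cons_val_one, Matrix.head_cons,
      Matrix.cons_val_two, Matrix.tail_cons, Matrix.cons_val_three,
      Matrix.vecHead, Matrix.vecTail, Function.comp]
    rw [show N * ψ * (f 1 / f 1) = N * ψ * f 1 / f 1 from by ring,
      show N * (f 1 / (f 1 + f 1)) = N * f 1 / (f 1 + f 1) from by ring]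
    apply my_div_lt_div _ _ _ _ (by positivity) (by positivity)
    linarith [mul_pos (mul_pos hN (mul_pos hf1 hf1)) (sub_pos.mpr h5)]
  have s6 : uAcScore f DD QQ ![0,1,0,1] 1 < uAcScore f DD QQ ![0,0,0,1] 1 := by
    simp only [uAcScore, scoreMed, Finset.sum_filter, Fin.sum_univ_four]
    simp [uAcScore, scoreMed, Finset.sum_filter, Fin.sum_univ_four, hDD, hQQ,
      Matrix.cons_val_zero, Matrix.cons_val_one, Matrix.head_cons,
      Matrix.cons_val_two, Matrix.tail_cons, Matrix.cons_val_three,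
      Matrix.vecHead, Matrix.vecTail, Function.comp]
    rw [show N * φ * (f x3 / (f x3 + f 1)) * x3 = N * φ * (f x3 * x3) / (f x3 + f 1) from by ring,
      show N * (f x2 / (f 1 + f x2 + f 1)) * x2 = N * (f x2 * x2) / (f 1 + f x2 + f 1) from by ring]
    apply my_div_lt_div _ _ _ _ (by positivity) (by positivity)
    linarith [mul_pos hN (sub_pos.mpr h6)]
  refine ⟨4, 3, 6, DD, QQ,
    ![![0,0,0,1], ![1,0,0,1], ![1,2,0,1], ![2,2,0,1], ![2,1,0,1], ![0,1,0,1], ![0,0,0,1]],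
    by norm_num, ?_, ?_, ?_, ?_, ?_⟩
  · intro k
    fin_cases k
    · exact hN.le
    · exact (mul_pos hN hφ0).le
    · exact (mul_pos hN hψ0).le
  · rw [Fin.sum_univ_three]
    simp only [hDD, Matrix.cons_val_zero, Matrix.cons_val_one, Matrix.head_cons,
      Matrix.cons_val_two, Matrix.tail_cons]
    rw [hNdef]
    field_simp
  · intro j k
    fin_cases j <;> fin_cases k <;>
      simp [hQQ, Matrix.cons_val_zero, Matrix.cons_val_one, Matrix.head_cons,
        Matrix.cons_val_two, Matrix.tail_cons, Matrix.vecHead, Matrix.vecTail,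
        Function.comp, Set.mem_Icc] <;>
      first
        | exact ⟨by linarith, by linarith⟩
        | norm_num
  · intro r
    fin_cases r
    · exact ⟨0, by decide, by decide, s1⟩
    · exact ⟨1, by decide, by decide, s2⟩
    · exact ⟨0, by decide, by decide, s3⟩
    · exact ⟨1, by decide, by decide, s4⟩
    · exact ⟨0, by decide, by decide, s5⟩
    · exact ⟨1, by decide, by decide, s6⟩
  · rfl
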